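/- Let A_z = [[u, a/M], [a/M, u]] with 0 < Mu < a, and let P_z = [[1, p], [−p, 1]] for any real p. Then P_z is invertible, its symmetric part is the identity (hence P_z is positive definite as a quadratic form), and the eigenvalues of P_z A_z are u + a_p and u − a_p where a_p = sqrt(u² + (1 + p²)(a²/M² − u²)). -/
import Mathlib


open Matrix

/-- Miczek's 2×2 preconditioner: for `A_z = [[u, a/M],[a/M, u]]` with
`0 < M u < a` and `P_z = [[1, p],[-p, 1]]`, the matrix `P_z` is invertible, its
symmetric part is the identity (so it is positive definite as a quadratic form),
and the eigenvalues of `P_z A_z` are `u + a_p` and `u - a_p` with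
`a_p = sqrt (u² + (1 + p²)(a²/M² - u²))`. -/
theorem stmt_9 (u a M p : ℝ) (ha : 0 < a) (hM : 0 < M)
    (hu : 0 < M * u) (hsub : M * u < a) :
    IsUnit (!![(1 : ℝ), p; -p, 1]).det ∧
    ((1 / 2 : ℝ) • (!![(1 : ℝ), p; -p, 1] + (!![(1 : ℝ), p; -p, 1]).transpose) = 1) ∧
    (∀ x : Fin 2 → ℝ, x ≠ 0 → 0 < x ⬝ᵥ (!![(1 : ℝ), p; -p, 1] *ᵥ x)) ∧
    (∀ x : ℝ,
      (!![(1 : ℝ), p; -p, 1] * !![u, a / M; a / M, u] - x • 1).det =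
        (u + Real.sqrt (u ^ 2 + (1 + p ^ 2) * (a ^ 2 / M ^ 2 - u ^ 2)) - x) *
        (u - Real.sqrt (u ^ 2 + (1 + p ^ 2) * (a ^ 2 / M ^ 2 - u ^ 2)) - x)) := by
  refine ⟨?_, ?_, ?_, ?_⟩
  · simp [Matrix.det_fin_two, isUnit_iff_ne_zero]
    nlinarith [sq_nonneg p]
  · have ht : (!![(1 : ℝ), p; -p, 1]).transpose = !![(1 : ℝ), -p; p, 1] := by
      rw [Matrix.eta_fin_two (!![(1 : ℝ), p; -p, 1]).transpose]
      simp
    rw [ht, Matrix.one_fin_two]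
    ext i j
    fin_cases i <;> fin_cases j <;> simp <;> ring
  · intro x hx
    have h : x 0 ≠ 0 ∨ x 1 ≠ 0 := by
      by_contra h
      push_neg at h
      apply hx
      ext i; fin_cases i <;> simp [h.1, h.2]
    simp [Matrix.mulVec, dotProduct, Fin.sum_univ_two]
    have : x 0 * (x 0 + p * x 1) + x 1 * (-(p * x 0) + x 1) = x 0 ^ 2 + x 1 ^ 2 := by ring
    rw [this]
    rcases h with h | h
    · have := sq_nonneg (x 1); positivity
    · have := sq_nonneg (x 0); positivity
  · intro x
    have hS : (0:ℝ) ≤ u ^ 2 + (1 + p ^ 2) * (a ^ 2 / M ^ 2 - u ^ 2) := by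
      have hlt : u < a / M := by
        rw [lt_div_iff₀ hM]; nlinarith
      have hpos : 0 < u := by
        have := mul_pos hM hM
        nlinarith
      have : u ^ 2 < a ^ 2 / M ^ 2 := by
        rw [lt_div_iff₀ (by positivity)]
        nlinarith
      nlinarith [sq_nonneg p]
    have hsq := Real.sq_sqrt hS
    simp [Matrix.det_fin_two, Matrix.mul_apply, Fin.sum_univ_two, Matrix.one_apply]
    linear_combination hsq
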